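/- Let A_1, ..., A_T ∈ ℝ^{n×m}, let σ = max{σ' : σ' is a singular value of some A_i} with σ > 0, and suppose the EG step sizes satisfy α = γ < 1/σ. Let Ã = M_EG(A_T)·M_EG(A_{T−1})···M_EG(A_1). Then: (i) ‖M_EG(A_i)‖₂ ≤ 1 for every i ∈ {1,...,T}; (ii) ker(Ã − I) = ∩_{i=1}^T ker(M_EG(A_i) − I); and (iii) every (complex) eigenvalue of Ã other than 1 has modulus strictly less than 1, i.e., λ* = max{|λ| : λ eigenvalue of Ã, λ ≠ 1} satisfies λ* < 1. -/

import Mathlib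

open Matrix

/-- Spectral (operator 2-)norm of a real matrix; this is also its largest singular value. -/
noncomputable def mnorm2 {ι κ : Type*} [Fintype ι] [Fintype κ] [DecidableEq κ]
    (M : Matrix ι κ ℝ) : ℝ :=
  ‖LinearMap.toContinuousLinearMap (Matrix.toEuclideanLin M)‖

/-- The extra-gradient (EG) iterative matrix
`M_EG(A) = [[I − αγ A Aᵀ, −α A], [α Aᵀ, I − αγ Aᵀ A]]`. -/
noncomputable def MEG {n m : ℕ} (α γ : ℝ) (A : Matrix (Fin n) (Fin m) ℝ) :
    Matrix (Fin n ⊕ Fin m) (Fin n ⊕ Fin m) ℝ :=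
  fromBlocks (1 - (α * γ) • (A * Aᵀ)) ((-α) • A) (α • Aᵀ) (1 - (α * γ) • (Aᵀ * A))

/-- `μ : ℂ` is an eigenvalue of the real matrix `M`. -/
def IsEig {d : Type*} [Fintype d] (M : Matrix d d ℝ) (μ : ℂ) : Prop :=
  ∃ v : d → ℂ, v ≠ 0 ∧ (M.map (fun x : ℝ => (x : ℂ))).mulVec v = μ • v

/-- `λ* = max{|λ| : λ eigenvalue of M, λ ≠ 1}`. -/
noncomputable def lamStar {d : Type*} [Fintype d] (M : Matrix d d ℝ) : ℝ :=
  sSup {r : ℝ | ∃ μ : ℂ, IsEig M μ ∧ μ ≠ 1 ∧ r = ‖μ‖}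

/-- `periodProd α γ A k = M_EG(A_{k-1}) ⋯ M_EG(A_1) M_EG(A_0)`. -/
noncomputable def periodProd {n m : ℕ} (α γ : ℝ) (A : ℕ → Matrix (Fin n) (Fin m) ℝ) :
    ℕ → Matrix (Fin n ⊕ Fin m) (Fin n ⊕ Fin m) ℝ
  | 0 => 1
  | k + 1 => MEG α γ (A k) * periodProd α γ A k

namespace EGAux

set_option linter.unusedSectionVars false
set_option linter.unusedVariables false

noncomputable section
open Complex
open scoped Matrix.Norms.L2Operator

variable {d e : Type*} [Fintype d] [Fintype e]

def cplx {d e : Type*} (M : Matrix d e ℝ) : Matrix d e ℂ := M.map (fun x : ℝ => (x : ℂ))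

def nsq (v : d → ℂ) : ℝ := ∑ i, Complex.normSq (v i)

def rsq (x : d → ℝ) : ℝ := ∑ i, (x i) ^ 2

lemma nsq_nonneg (v : d → ℂ) : 0 ≤ nsq v :=
  Finset.sum_nonneg fun i _ => Complex.normSq_nonneg _

lemma rsq_nonneg (x : d → ℝ) : 0 ≤ rsq x := Finset.sum_nonneg fun i _ => sq_nonneg _

lemma nsq_eq_zero {v : d → ℂ} (h : nsq v = 0) : v = 0 := by
  funext i
  have := (Finset.sum_eq_zero_iff_of_nonneg (fun i _ => Complex.normSq_nonneg (v i))).mp h i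
    (Finset.mem_univ i)
  simpa using Complex.normSq_eq_zero.mp this

lemma nsq_pos {v : d → ℂ} (h : v ≠ 0) : 0 < nsq v :=
  lt_of_le_of_ne (nsq_nonneg v) fun h0 => h (nsq_eq_zero h0.symm)

lemma nsq_smul (μ : ℂ) (v : d → ℂ) : nsq (μ • v) = Complex.normSq μ * nsq v := by
  simp [nsq, Finset.mul_sum, Complex.normSq_mul]

lemma star_dot_self (v : d → ℂ) : star v ⬝ᵥ v = (nsq v : ℂ) := by
  simp only [dotProduct, nsq, Complex.ofReal_sum, Pi.star_apply]
  exact Finset.sum_congr rfl fun i _ => by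
    rw [Complex.normSq_eq_conj_mul_self]; rfl

lemma nsq_coe (x : d → ℝ) : nsq (fun i => (x i : ℂ)) = rsq x := by
  simp [nsq, rsq, Complex.normSq_ofReal, sq]

lemma cplx_mul [DecidableEq e] (M : Matrix d e ℝ) (N : Matrix e e ℝ) :
    cplx (M * N) = cplx M * cplx N :=
  _root_.Matrix.map_mul (f := Complex.ofRealHom)

lemma cplx_one [DecidableEq d] : cplx (1 : Matrix d d ℝ) = 1 :=
  Matrix.map_one _ (by simp) (by simp)

lemma cplx_smul {d e : Type*} (r : ℝ) (M : Matrix d e ℝ) : cplx (r • M) = (r : ℂ) • cplx M := by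
  ext i j; simp [cplx]

lemma cplx_add {d e : Type*} (M N : Matrix d e ℝ) : cplx (M + N) = cplx M + cplx N := by
  ext i j; simp [cplx]

lemma cplx_neg {d e : Type*} (M : Matrix d e ℝ) : cplx (-M) = -cplx M := by
  ext i j; simp [cplx]

lemma cplx_zero {d e : Type*} : cplx (0 : Matrix d e ℝ) = 0 := by
  ext i j; simp [cplx]

lemma cplx_conjTranspose {d e : Type*} (M : Matrix d e ℝ) : (cplx M)ᴴ = cplx Mᵀ := by
  ext i j; simp [cplx, conjTranspose_apply, Complex.conj_ofReal]

lemma cplx_mulVec_coe (M : Matrix d e ℝ) (x : e → ℝ) :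
    cplx M *ᵥ (fun i => (x i : ℂ)) = fun i => ((M *ᵥ x) i : ℂ) := by
  funext i
  simp only [cplx, mulVec, dotProduct, map_apply, Complex.ofReal_sum]
  exact Finset.sum_congr rfl fun j _ => by push_cast; ring

lemma coe_inj {x y : d → ℝ} (h : (fun i => (x i : ℂ)) = fun i => (y i : ℂ)) : x = y := by
  funext i
  exact Complex.ofReal_injective (congrFun h i)

/-! ### Norm bridge -/

lemma mnorm2_eq_norm [DecidableEq e] (M : Matrix d e ℝ) : mnorm2 M = ‖M‖ := rfl

lemma mnorm2_nonneg [DecidableEq e] (M : Matrix d e ℝ) : 0 ≤ mnorm2 M := norm_nonneg _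

lemma norm_symm_eq (x : d → ℝ) :
    ‖(WithLp.equiv 2 (d → ℝ)).symm x‖ = Real.sqrt (rsq x) := by
  rw [EuclideanSpace.norm_eq]
  congr 1
  simp [rsq, Real.norm_eq_abs, sq_abs]

lemma real_conjTranspose (M : Matrix d e ℝ) : Mᴴ = Mᵀ := by
  ext i j; simp [conjTranspose_apply]

lemma mnorm2_transpose [DecidableEq d] [DecidableEq e] (M : Matrix d e ℝ) :
    mnorm2 Mᵀ = mnorm2 M := by
  rw [mnorm2_eq_norm, mnorm2_eq_norm, ← real_conjTranspose]
  exact Matrix.l2_opNorm_conjTranspose M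

lemma rsq_mulVec_le [DecidableEq e] (M : Matrix d e ℝ) (x : e → ℝ) :
    rsq (M *ᵥ x) ≤ (mnorm2 M) ^ 2 * rsq x := by
  have h := (LinearMap.toContinuousLinearMap (Matrix.toEuclideanLin M)).le_opNorm
    ((WithLp.equiv 2 (e → ℝ)).symm x)
  rw [LinearMap.coe_toContinuousLinearMap', show ∀ y, Matrix.toEuclideanLin M
      ((WithLp.equiv 2 (e → ℝ)).symm y) = (WithLp.equiv 2 (d → ℝ)).symm (M *ᵥ y) from fun _ => rfl,
    norm_symm_eq, norm_symm_eq] at h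
  have h2 : Real.sqrt (rsq (M *ᵥ x)) ^ 2 ≤ (mnorm2 M * Real.sqrt (rsq x)) ^ 2 :=
    pow_le_pow_left₀ (Real.sqrt_nonneg _) h 2
  rw [Real.sq_sqrt (rsq_nonneg _)] at h2
  calc rsq (M *ᵥ x) ≤ (mnorm2 M * Real.sqrt (rsq x)) ^ 2 := h2
    _ = (mnorm2 M) ^ 2 * rsq x := by
        rw [mul_pow, Real.sq_sqrt (rsq_nonneg _)]

lemma mnorm2_le_one_of [DecidableEq d] (M : Matrix d d ℝ)
    (h : ∀ x : d → ℝ, rsq (M *ᵥ x) ≤ rsq x) : mnorm2 M ≤ 1 := by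
  apply ContinuousLinearMap.opNorm_le_bound _ zero_le_one
  intro x
  have hx : x = (WithLp.equiv 2 (d → ℝ)).symm ((WithLp.equiv 2 (d → ℝ)) x) := rfl
  rw [LinearMap.coe_toContinuousLinearMap', hx, show ∀ y, Matrix.toEuclideanLin M
      ((WithLp.equiv 2 (d → ℝ)).symm y) = (WithLp.equiv 2 (d → ℝ)).symm (M *ᵥ y) from fun _ => rfl,
    norm_symm_eq, norm_symm_eq, one_mul]
  exact Real.sqrt_le_sqrt (h _)

/-! ### Complexified bounds -/

lemma nsq_cplx_decomp (M : Matrix d e ℝ) (w : e → ℂ) :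
    nsq (cplx M *ᵥ w) =
      rsq (M *ᵥ fun k => (w k).re) + rsq (M *ᵥ fun k => (w k).im) := by
  simp only [nsq, rsq, cplx, mulVec, dotProduct, map_apply, Complex.normSq_apply]
  rw [← Finset.sum_add_distrib]
  refine Finset.sum_congr rfl fun i _ => ?_
  congr 1 <;> rw [← sq] <;> congr 1
  · rw [Complex.re_sum]
    exact Finset.sum_congr rfl fun j _ => Complex.re_ofReal_mul _ _
  · rw [Complex.im_sum]
    exact Finset.sum_congr rfl fun j _ => Complex.im_ofReal_mul _ _

lemma nsq_split (w : d → ℂ) :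
    nsq w = rsq (fun i => (w i).re) + rsq (fun i => (w i).im) := by
  simp [nsq, rsq, Complex.normSq_apply, Finset.sum_add_distrib, sq]

lemma nsq_cplx_mulVec_le [DecidableEq e] (M : Matrix d e ℝ) (σ : ℝ) (hσ : 0 ≤ σ)
    (hM : mnorm2 M ≤ σ) (w : e → ℂ) :
    nsq (cplx M *ᵥ w) ≤ σ ^ 2 * nsq w := by
  rw [nsq_cplx_decomp, nsq_split]
  have h1 := rsq_mulVec_le M (fun k => (w k).re)
  have h2 := rsq_mulVec_le M (fun k => (w k).im)
  have hm : (mnorm2 M) ^ 2 ≤ σ ^ 2 := pow_le_pow_left₀ (mnorm2_nonneg M) hM 2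
  nlinarith [rsq_nonneg (fun k => (w k).re), rsq_nonneg (fun k => (w k).im)]

lemma nsq_neg (v : d → ℂ) : nsq (-v) = nsq v := by simp [nsq]

lemma nsq_elim {a : d → ℂ} {b : e → ℂ} : nsq (Sum.elim a b) = nsq a + nsq b := by
  simp [nsq, Fintype.sum_sum_type]

/-! ### Quadratic norm identity for skew matrices -/

lemma stardot [DecidableEq d] (M : Matrix d d ℂ) (v : d → ℂ) :
    star (M *ᵥ v) ⬝ᵥ (M *ᵥ v) = star v ⬝ᵥ ((Mᴴ * M) *ᵥ v) := by
  simp only [star_mulVec, dotProduct_mulVec, vecMul_vecMul]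

lemma MHM [DecidableEq d] (N : Matrix d d ℂ) (a : ℂ) (hN : Nᴴ = -N) (ha : star a = a) :
    (1 + a • N + (a * a) • (N * N))ᴴ * (1 + a • N + (a * a) • (N * N)) =
      1 + (a * a) • (N * N) + ((a * a) * (a * a)) • ((N * N) * (N * N)) := by
  simp only [conjTranspose_add, conjTranspose_smul, conjTranspose_one, conjTranspose_mul, hN, ha,
    star_mul', Matrix.neg_mul, Matrix.mul_neg, neg_neg, smul_neg]
  simp only [add_mul, mul_add, Matrix.smul_mul, Matrix.mul_smul, Matrix.one_mul, Matrix.mul_one,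
    smul_smul, mul_assoc, Matrix.neg_mul, Matrix.mul_neg, smul_neg, neg_neg]
  module

lemma dot_sq [DecidableEq d] (N : Matrix d d ℂ) (hN : Nᴴ = -N) (v : d → ℂ) :
    star v ⬝ᵥ ((N * N) *ᵥ v) = -(nsq (N *ᵥ v) : ℂ) := by
  have hs : star (N *ᵥ v) = -(star v ᵥ* N) := by
    rw [star_mulVec, hN, Matrix.vecMul_neg]
  rw [← star_dot_self (N *ᵥ v), hs, neg_dotProduct, neg_neg, ← mulVec_mulVec,
    dotProduct_mulVec]

lemma dot_quar [DecidableEq d] (N : Matrix d d ℂ) (hN : Nᴴ = -N) (v : d → ℂ) :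
    star v ⬝ᵥ (((N * N) * (N * N)) *ᵥ v) = (nsq (N *ᵥ (N *ᵥ v)) : ℂ) := by
  have hs : star ((N * N) *ᵥ v) = star v ᵥ* (N * N) := by
    rw [← mulVec_mulVec, star_mulVec, star_mulVec, hN]
    simp [Matrix.vecMul_neg, Matrix.neg_vecMul, vecMul_vecMul]
  rw [mulVec_mulVec, ← star_dot_self ((N * N) *ᵥ v)]
  simp only [hs, dotProduct_mulVec, vecMul_vecMul, mulVec_mulVec]

lemma nsq_step [DecidableEq d] (N : Matrix d d ℂ) (a : ℝ) (hN : Nᴴ = -N) (v : d → ℂ) :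
    nsq ((1 + (a : ℂ) • N + ((a : ℂ) * (a : ℂ)) • (N * N)) *ᵥ v) =
      nsq v - a ^ 2 * nsq (N *ᵥ v) + a ^ 2 * a ^ 2 * nsq (N *ᵥ (N *ᵥ v)) := by
  have key : (nsq ((1 + (a : ℂ) • N + ((a : ℂ) * (a : ℂ)) • (N * N)) *ᵥ v) : ℂ) =
      star v ⬝ᵥ ((1 + ((a : ℂ) * (a : ℂ)) • (N * N) +
        (((a : ℂ) * (a : ℂ)) * ((a : ℂ) * (a : ℂ))) • ((N * N) * (N * N))) *ᵥ v) := by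
    rw [← star_dot_self, stardot, MHM N (a : ℂ) hN (Complex.conj_ofReal a)]
  have expand : star v ⬝ᵥ ((1 + ((a : ℂ) * (a : ℂ)) • (N * N) +
        (((a : ℂ) * (a : ℂ)) * ((a : ℂ) * (a : ℂ))) • ((N * N) * (N * N))) *ᵥ v) =
      (nsq v : ℂ) + ((a : ℂ) * (a : ℂ)) * (-(nsq (N *ᵥ v) : ℂ)) +
        (((a : ℂ) * (a : ℂ)) * ((a : ℂ) * (a : ℂ))) * (nsq (N *ᵥ (N *ᵥ v)) : ℂ) := by
    rw [add_mulVec, add_mulVec, one_mulVec, smul_mulVec, smul_mulVec,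
      dotProduct_add, dotProduct_add, dotProduct_smul, dotProduct_smul, star_dot_self,
      dot_sq N hN, dot_quar N hN]
    simp [smul_eq_mul]
  apply Complex.ofReal_injective
  rw [key, expand]
  push_cast
  ring

lemma step_le [DecidableEq d] (N : Matrix d d ℂ) (a s : ℝ) (hN : Nᴴ = -N)
    (hb : ∀ w, nsq (N *ᵥ w) ≤ s ^ 2 * nsq w) (ha : 0 ≤ a) (hs : 0 ≤ s) (has : a * s ≤ 1)
    (v : d → ℂ) :
    nsq ((1 + (a : ℂ) • N + ((a : ℂ) * (a : ℂ)) • (N * N)) *ᵥ v) ≤ nsq v := by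
  rw [nsq_step N a hN v]
  have h1 := hb (N *ᵥ v)
  have h2 := nsq_nonneg (N *ᵥ v)
  have k1 : a ^ 2 * a ^ 2 * nsq (N *ᵥ (N *ᵥ v)) ≤ a ^ 2 * a ^ 2 * (s ^ 2 * nsq (N *ᵥ v)) :=
    mul_le_mul_of_nonneg_left h1 (by positivity)
  have k2 : a ^ 2 * s ^ 2 ≤ 1 := by nlinarith [mul_nonneg ha hs]
  have k3 : (a ^ 2 * s ^ 2) * (a ^ 2 * nsq (N *ᵥ v)) ≤ 1 * (a ^ 2 * nsq (N *ᵥ v)) :=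
    mul_le_mul_of_nonneg_right k2 (by positivity)
  nlinarith [k1, k3]

lemma step_fix [DecidableEq d] (N : Matrix d d ℂ) (a s : ℝ) (hN : Nᴴ = -N)
    (hb : ∀ w, nsq (N *ᵥ w) ≤ s ^ 2 * nsq w) (ha : 0 < a) (hs : 0 ≤ s) (has : a * s < 1)
    (v : d → ℂ)
    (heq : nsq ((1 + (a : ℂ) • N + ((a : ℂ) * (a : ℂ)) • (N * N)) *ᵥ v) = nsq v) :
    (1 + (a : ℂ) • N + ((a : ℂ) * (a : ℂ)) • (N * N)) *ᵥ v = v := by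
  rw [nsq_step N a hN v] at heq
  have hNv : N *ᵥ v = 0 := by
    apply nsq_eq_zero
    by_contra hne
    have hpos : 0 < nsq (N *ᵥ v) :=
      lt_of_le_of_ne (nsq_nonneg _) (Ne.symm hne)
    have h1 := hb (N *ᵥ v)
    have k1 : a ^ 2 * a ^ 2 * nsq (N *ᵥ (N *ᵥ v)) ≤ a ^ 2 * a ^ 2 * (s ^ 2 * nsq (N *ᵥ v)) :=
      mul_le_mul_of_nonneg_left h1 (by positivity)
    have k2 : a ^ 2 * s ^ 2 < 1 := by nlinarith [mul_nonneg ha.le hs]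
    have k3 : 0 < a ^ 2 * nsq (N *ᵥ v) := by positivity
    nlinarith [k1, k2, k3]
  rw [add_mulVec, add_mulVec, one_mulVec, smul_mulVec, smul_mulVec,
    ← mulVec_mulVec, hNv]
  simp

/-! ### Chains of products -/

lemma chain_le [DecidableEq d] (f P : ℕ → Matrix d d ℂ) (T : ℕ)
    (hP0 : P 0 = 1) (hPs : ∀ k, P (k + 1) = f k * P k)
    (hle : ∀ i < T, ∀ w, nsq (f i *ᵥ w) ≤ nsq w) :
    ∀ k ≤ T, ∀ l ≤ k, ∀ v, nsq (P k *ᵥ v) ≤ nsq (P l *ᵥ v) := by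
  intro k hk
  induction k with
  | zero => intro l hl v; interval_cases l; exact le_refl _
  | succ k ih =>
    intro l hl v
    have hstep : nsq (P (k + 1) *ᵥ v) ≤ nsq (P k *ᵥ v) := by
      rw [hPs k, ← mulVec_mulVec]
      exact hle k (by omega) _
    rcases Nat.eq_or_lt_of_le hl with h | h
    · subst h; exact le_refl _
    · exact le_trans hstep (ih (by omega) l (by omega) v)

lemma chain_fix [DecidableEq d] (f P : ℕ → Matrix d d ℂ) (T : ℕ)
    (hP0 : P 0 = 1) (hPs : ∀ k, P (k + 1) = f k * P k)
    (hle : ∀ i < T, ∀ w, nsq (f i *ᵥ w) ≤ nsq w)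
    (hfix : ∀ i < T, ∀ w, nsq (f i *ᵥ w) = nsq w → f i *ᵥ w = w)
    (v : d → ℂ) (hv : nsq v ≤ nsq (P T *ᵥ v)) :
    (∀ k ≤ T, P k *ᵥ v = v) ∧ (∀ i < T, f i *ᵥ v = v) := by
  have hP0v : P 0 *ᵥ v = v := by rw [hP0, one_mulVec]
  have heq : ∀ k ≤ T, nsq (P k *ᵥ v) = nsq v := by
    intro k hk
    have h1 : nsq (P k *ᵥ v) ≤ nsq (P 0 *ᵥ v) :=
      chain_le f P T hP0 hPs hle k hk 0 (Nat.zero_le _) v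
    have h2 : nsq (P T *ᵥ v) ≤ nsq (P k *ᵥ v) :=
      chain_le f P T hP0 hPs hle T le_rfl k hk v
    rw [hP0v] at h1
    linarith [hv, h1, h2]
  have hPk : ∀ k ≤ T, P k *ᵥ v = v := by
    intro k hk
    induction k with
    | zero => exact hP0v
    | succ k ih =>
      have hk' : k ≤ T := by omega
      have hPkv := ih hk'
      have h1 : nsq (f k *ᵥ v) = nsq v := by
        have : P (k + 1) *ᵥ v = f k *ᵥ v := by
          rw [hPs k, ← mulVec_mulVec, hPkv]
        rw [← this]
        exact heq (k + 1) hk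
      have h2 := hfix k (by omega) v h1
      rw [hPs k, ← mulVec_mulVec, hPkv, h2]
  refine ⟨hPk, fun i hi => ?_⟩
  have h1 : nsq (f i *ᵥ v) = nsq v := by
    have : P (i + 1) *ᵥ v = f i *ᵥ v := by
      rw [hPs i, ← mulVec_mulVec, hPk i (by omega)]
    rw [← this]
    exact heq (i + 1) hi
  exact hfix i hi v h1

/-! ### The EG block structure -/

variable {n m : ℕ}

def Bmat (A : Matrix (Fin n) (Fin m) ℝ) : Matrix (Fin n ⊕ Fin m) (Fin n ⊕ Fin m) ℝ :=
  fromBlocks 0 (-A) Aᵀ 0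

lemma Bmat_transpose (A : Matrix (Fin n) (Fin m) ℝ) : (Bmat A)ᵀ = -(Bmat A) := by
  simp [Bmat, fromBlocks_transpose, fromBlocks_neg]

lemma MEG_eq (α : ℝ) (A : Matrix (Fin n) (Fin m) ℝ) :
    MEG α α A = 1 + α • Bmat A + (α * α) • (Bmat A * Bmat A) := by
  rw [MEG, Bmat, fromBlocks_multiply, ← fromBlocks_one]
  simp only [fromBlocks_smul, fromBlocks_add, Matrix.mul_zero, Matrix.zero_mul,
    Matrix.neg_mul, Matrix.mul_neg, add_zero, zero_add, smul_neg, smul_zero, neg_zero]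
  rw [sub_eq_add_neg, sub_eq_add_neg, neg_smul]

lemma cplx_Bmat (A : Matrix (Fin n) (Fin m) ℝ) :
    cplx (Bmat A) = fromBlocks 0 (-(cplx A)) (cplx Aᵀ) 0 := by
  ext i j
  cases i <;> cases j <;> simp [Bmat, cplx]

lemma cplx_Bmat_skew (A : Matrix (Fin n) (Fin m) ℝ) :
    (cplx (Bmat A))ᴴ = -(cplx (Bmat A)) := by
  rw [cplx_conjTranspose, Bmat_transpose, cplx_neg]

lemma cplx_MEG (α : ℝ) (A : Matrix (Fin n) (Fin m) ℝ) :
    cplx (MEG α α A) = 1 + (α : ℂ) • cplx (Bmat A) +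
      ((α : ℂ) * (α : ℂ)) • (cplx (Bmat A) * cplx (Bmat A)) := by
  rw [MEG_eq, cplx_add, cplx_add, cplx_one, cplx_smul, cplx_smul, cplx_mul,
    Complex.ofReal_mul]

lemma Bmat_bound (A : Matrix (Fin n) (Fin m) ℝ) (σ : ℝ) (hσ : 0 ≤ σ)
    (hA : mnorm2 A ≤ σ) (w : Fin n ⊕ Fin m → ℂ) :
    nsq (cplx (Bmat A) *ᵥ w) ≤ σ ^ 2 * nsq w := by
  have hw : w = Sum.elim (w ∘ Sum.inl) (w ∘ Sum.inr) := (Sum.elim_comp_inl_inr w).symm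
  rw [cplx_Bmat]
  conv_lhs => rw [hw]
  rw [fromBlocks_mulVec, zero_mulVec, zero_mulVec, neg_mulVec, zero_add, add_zero, nsq_elim,
    nsq_neg]
  simp only [Sum.elim_comp_inl, Sum.elim_comp_inr]
  have h1 := nsq_cplx_mulVec_le A σ hσ hA (w ∘ Sum.inr)
  have h2 := nsq_cplx_mulVec_le Aᵀ σ hσ (by rw [mnorm2_transpose]; exact hA) (w ∘ Sum.inl)
  have h3 : nsq w = nsq (w ∘ Sum.inl) + nsq (w ∘ Sum.inr) := by
    conv_lhs => rw [hw]
    exact nsq_elim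
  rw [h3, mul_add]
  linarith

/-! ### Eigenvalues and the spectrum -/

lemma eig_mem_spectrum {d : Type*} [Fintype d] [DecidableEq d] {M : Matrix d d ℝ} {μ : ℂ}
    (h : IsEig M μ) : μ ∈ spectrum ℂ (cplx M) := by
  obtain ⟨v, hv0, hvE⟩ := h
  rw [spectrum.mem_iff]
  intro hu
  rw [Matrix.isUnit_iff_isUnit_det, isUnit_iff_ne_zero] at hu
  apply hu
  rw [← Matrix.exists_mulVec_eq_zero_iff]
  refine ⟨v, hv0, ?_⟩
  rw [Algebra.algebraMap_eq_smul_one, sub_mulVec, smul_mulVec, one_mulVec]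
  rw [show cplx M *ᵥ v = μ • v from hvE]
  simp

end
end EGAux
open EGAux in
theorem stmt10 {n m : ℕ} (T : ℕ) (hT : 0 < T)
    (A : ℕ → Matrix (Fin n) (Fin m) ℝ)
    (σ : ℝ)
    (hσdef : σ = (Finset.range T).sup' (Finset.nonempty_range_iff.mpr hT.ne')
        (fun i => mnorm2 (A i)))
    (hσpos : 0 < σ)
    (α γ : ℝ) (hα : 0 < α) (hαγ : α = γ) (hstep : α < 1 / σ) :
    (∀ i < T, mnorm2 (MEG α γ (A i)) ≤ 1) ∧
    (∀ v : Fin n ⊕ Fin m → ℝ,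
        (periodProd α γ A T).mulVec v = v ↔ ∀ i < T, (MEG α γ (A i)).mulVec v = v) ∧
    (∀ μ : ℂ, IsEig (periodProd α γ A T) μ → μ ≠ 1 → ‖μ‖ < 1) ∧
    lamStar (periodProd α γ A T) < 1 := by
  subst hαγ
  have hσi : ∀ i < T, mnorm2 (A i) ≤ σ := by
    intro i hi
    rw [hσdef]
    exact Finset.le_sup' (f := fun i => mnorm2 (A i)) (Finset.mem_range.mpr hi)
  have hασ : α * σ < 1 := (lt_div_iff₀ hσpos).mp hstep
  -- the complexified EG matrices
  have hN : ∀ i : ℕ, (cplx (Bmat (A i)))ᴴ = -(cplx (Bmat (A i))) := fun i => cplx_Bmat_skew _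
  have hb : ∀ i < T, ∀ w, nsq (cplx (Bmat (A i)) *ᵥ w) ≤ σ ^ 2 * nsq w :=
    fun i hi w => Bmat_bound (A i) σ hσpos.le (hσi i hi) w
  have hle : ∀ i < T, ∀ w, nsq (cplx (MEG α α (A i)) *ᵥ w) ≤ nsq w := by
    intro i hi w
    rw [cplx_MEG]
    exact step_le _ α σ (hN i) (hb i hi) hα.le hσpos.le hασ.le w
  have hfix : ∀ i < T, ∀ w, nsq (cplx (MEG α α (A i)) *ᵥ w) = nsq w →
      cplx (MEG α α (A i)) *ᵥ w = w := by
    intro i hi w hw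
    rw [cplx_MEG] at hw ⊢
    exact step_fix _ α σ (hN i) (hb i hi) hα hσpos.le hασ w hw
  have hP0 : cplx (periodProd α α A 0) = 1 := by
    rw [show periodProd α α A 0 = 1 from rfl, cplx_one]
  have hPs : ∀ k, cplx (periodProd α α A (k + 1)) =
      cplx (MEG α α (A k)) * cplx (periodProd α α A k) := by
    intro k
    rw [show periodProd α α A (k + 1) = MEG α α (A k) * periodProd α α A k from rfl, cplx_mul]
  -- part (iii)
  have part3 : ∀ μ : ℂ, IsEig (periodProd α α A T) μ → μ ≠ 1 → ‖μ‖ < 1 := by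
    rintro μ ⟨v, hv0, hvE⟩ hμ1
    have hPT : cplx (periodProd α α A T) *ᵥ v = μ • v := hvE
    by_contra hlt
    push_neg at hlt
    have hv : nsq v ≤ nsq (cplx (periodProd α α A T) *ᵥ v) := by
      rw [hPT, nsq_smul]
      have h1 : 1 ≤ Complex.normSq μ := by
        rw [← Complex.sq_norm]
        nlinarith [norm_nonneg μ]
      nlinarith [nsq_nonneg v]
    obtain ⟨hPk, -⟩ := chain_fix (fun i => cplx (MEG α α (A i)))
      (fun k => cplx (periodProd α α A k)) T hP0 hPs hle hfix v hv
    have hfix1 : μ • v = v := by rw [← hPT, hPk T le_rfl]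
    apply hμ1
    have : (μ - 1) • v = 0 := by
      rw [sub_smul, one_smul, hfix1, sub_self]
    rcases smul_eq_zero.mp this with h | h
    · exact sub_eq_zero.mp h
    · exact absurd h hv0
  refine ⟨?_, ?_, part3, ?_⟩
  · -- part (i)
    intro i hi
    apply mnorm2_le_one_of
    intro x
    calc rsq (MEG α α (A i) *ᵥ x) = nsq (fun j => (((MEG α α (A i) *ᵥ x)) j : ℂ)) :=
          (nsq_coe _).symm
      _ = nsq (cplx (MEG α α (A i)) *ᵥ fun j => (x j : ℂ)) := by rw [cplx_mulVec_coe]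
      _ ≤ nsq (fun j => (x j : ℂ)) := hle i hi _
      _ = rsq x := nsq_coe x
  · -- part (ii)
    intro v
    constructor
    · intro hPv
      have hC : cplx (periodProd α α A T) *ᵥ (fun j => (v j : ℂ)) = fun j => (v j : ℂ) := by
        rw [cplx_mulVec_coe, hPv]
      have hv : nsq (fun j => (v j : ℂ)) ≤
          nsq (cplx (periodProd α α A T) *ᵥ fun j => (v j : ℂ)) := by rw [hC]
      obtain ⟨-, hMi⟩ := chain_fix (fun i => cplx (MEG α α (A i)))
        (fun k => cplx (periodProd α α A k)) T hP0 hPs hle hfix _ hv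
      intro i hi
      apply coe_inj
      rw [← cplx_mulVec_coe]
      exact hMi i hi
    · intro h
      have key : ∀ k ≤ T, periodProd α α A k *ᵥ v = v := by
        intro k hk
        induction k with
        | zero => rw [show periodProd α α A 0 = 1 from rfl, one_mulVec]
        | succ k ih =>
          rw [show periodProd α α A (k + 1) = MEG α α (A k) * periodProd α α A k from rfl,
            ← mulVec_mulVec, ih (by omega), h k (by omega)]
      exact key T le_rfl
  · -- part (iv)
    have hsub : {r : ℝ | ∃ μ : ℂ, IsEig (periodProd α α A T) μ ∧ μ ≠ 1 ∧ r = ‖μ‖} ⊆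
        (fun z : ℂ => ‖z‖) '' spectrum ℂ (cplx (periodProd α α A T)) := by
      rintro r ⟨μ, hμE, -, hr⟩
      exact ⟨μ, eig_mem_spectrum hμE, hr.symm⟩
    have hfin : Set.Finite
        {r : ℝ | ∃ μ : ℂ, IsEig (periodProd α α A T) μ ∧ μ ≠ 1 ∧ r = ‖μ‖} :=
      ((Matrix.finite_spectrum _).image _).subset hsub
    rcases Set.eq_empty_or_nonempty
        {r : ℝ | ∃ μ : ℂ, IsEig (periodProd α α A T) μ ∧ μ ≠ 1 ∧ r = ‖μ‖} with hS | hS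
    · rw [lamStar, hS, Real.sSup_empty]
      norm_num
    · obtain ⟨μ, hμE, hμ1, hr⟩ := hS.csSup_mem hfin
      rw [lamStar, hr]
      exact part3 μ hμE hμ1
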